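/- For every real number t > 0, one has tanh(t/2)^2 / (t^2 · arctan(1/sinh(t/2))) ≥ 1/(2π). -/

import Mathlib

open Real

set_option maxHeartbeats 2000000

private lemma exp_lower6 {x : ℝ} (hx : 0 ≤ x) :
    1 + x + x^2/2 + x^3/6 + x^4/24 + x^5/120 + x^6/720 ≤ Real.exp x := by
  have h := Real.sum_le_exp_of_nonneg hx 7
  have hs : (∑ i ∈ Finset.range 7, x ^ i / (i.factorial : ℝ)) =
      1 + x + x^2/2 + x^3/6 + x^4/24 + x^5/120 + x^6/720 := by
    simp [Finset.sum_range_succ, Nat.factorial]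
  rw [hs] at h
  exact h

private lemma sinh_lower {x : ℝ} (hx : 0 ≤ x) : x + x^3/6 + x^5/120 ≤ Real.sinh x := by
  obtain ⟨P, hP_def⟩ : ∃ P : ℝ, P = 1 + x + x^2/2 + x^3/6 + x^4/24 + x^5/120 + x^6/720 :=
    ⟨_, rfl⟩
  have hP : 0 < P := by rw [hP_def]; positivity
  have hE : P ≤ Real.exp x := hP_def ▸ exp_lower6 hx
  have hF : Real.exp (-x) ≤ P⁻¹ := by
    rw [Real.exp_neg]
    exact inv_anti₀ hP hE
  have hinv : P * P⁻¹ = 1 := mul_inv_cancel₀ hP.ne'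
  have hQ : 0 ≤ P^2 - 1 - 2*P*(x + x^3/6 + x^5/120) := by
    rw [hP_def]
    nlinarith [pow_nonneg hx 2, pow_nonneg hx 3, pow_nonneg hx 4, pow_nonneg hx 5,
      pow_nonneg hx 6, pow_nonneg hx 7, pow_nonneg hx 8, pow_nonneg hx 9,
      pow_nonneg hx 10, pow_nonneg hx 11, pow_nonneg hx 12]
  have hPinv : 0 < P⁻¹ := inv_pos.2 hP
  have key : 2*(x + x^3/6 + x^5/120) ≤ P - P⁻¹ := by
    nlinarith [hQ, hinv, hP, hPinv]
  rw [Real.sinh_eq]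
  linarith

private lemma cosh_upper {x : ℝ} (h0 : 0 ≤ x) (h1 : x ≤ 1) :
    Real.cosh x ≤ 1 + x^2/2 + x^4/24 + x^5/100 := by
  have hb := Real.exp_bound (x := x) (by rwa [abs_of_nonneg h0]) (n := 5) (by norm_num)
  have hb' := Real.exp_bound (x := -x) (by rwa [abs_neg, abs_of_nonneg h0]) (n := 5) (by norm_num)
  have hs : (∑ i ∈ Finset.range 5, x ^ i / (i.factorial : ℝ)) =
      1 + x + x^2/2 + x^3/6 + x^4/24 := by
    simp [Finset.sum_range_succ, Nat.factorial]
  have hs' : (∑ i ∈ Finset.range 5, (-x) ^ i / (i.factorial : ℝ)) =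
      1 - x + x^2/2 - x^3/6 + x^4/24 := by
    simp [Finset.sum_range_succ, Nat.factorial]
    ring
  rw [hs, abs_of_nonneg h0] at hb
  rw [hs', abs_neg, abs_of_nonneg h0] at hb'
  have e1 : Real.exp x ≤ 1 + x + x^2/2 + x^3/6 + x^4/24 + x^5 * (6/(120*5)) := by
    have := abs_le.1 hb
    push_cast at this
    norm_num [Nat.factorial] at this ⊢
    linarith [this.2]
  have e2 : Real.exp (-x) ≤ 1 - x + x^2/2 - x^3/6 + x^4/24 + x^5 * (6/(120*5)) := by
    have := abs_le.1 hb'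
    push_cast at this
    norm_num [Nat.factorial] at this ⊢
    linarith [this.2]
  rw [Real.cosh_eq]
  norm_num at e1 e2 ⊢
  linarith

private lemma tanh_lower {z : ℝ} (h0 : 0 ≤ z) (h1 : z ≤ 1/2) : z - z^3/3 ≤ Real.tanh z := by
  rw [Real.tanh_eq_sinh_div_cosh, le_div_iff₀ (Real.cosh_pos z)]
  have hc := cosh_upper h0 (by linarith)
  have hs := sinh_lower h0
  have hw : 0 ≤ z - z^3/3 := by nlinarith
  have h2 : (z - z^3/3) * Real.cosh z ≤ (z - z^3/3) * (1 + z^2/2 + z^4/24 + z^5/100) :=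
    mul_le_mul_of_nonneg_left hc hw
  nlinarith [h2, hs, pow_nonneg h0 5, pow_nonneg h0 7, pow_nonneg h0 8,
    mul_le_mul_of_nonneg_left h1 (pow_nonneg h0 5)]

private lemma tanh_upper {z : ℝ} (h0 : 0 ≤ z) (h1 : z ≤ 1/2) : Real.tanh z ≤ z := by
  rw [Real.tanh_eq_sinh_div_cosh, div_le_iff₀ (Real.cosh_pos z)]
  have hb := Real.exp_bound (x := z) (by rw [abs_of_nonneg h0]; linarith) (n := 3) (by norm_num)
  have hs3 : (∑ i ∈ Finset.range 3, z ^ i / (i.factorial : ℝ)) = 1 + z + z^2/2 := by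
    simp [Finset.sum_range_succ, Nat.factorial]
  rw [hs3, abs_of_nonneg h0] at hb
  have hU : Real.exp z ≤ 1 + z + z^2/2 + 2*z^3/9 := by
    have := (abs_le.1 hb).2
    norm_num [Nat.factorial] at this ⊢
    linarith
  have hL : 1 - z ≤ Real.exp (-z) := by linarith [Real.add_one_le_exp (-z)]
  have hE1 : (1:ℝ) ≤ Real.exp z := Real.one_le_exp h0
  have hinv : Real.exp z * Real.exp (-z) = 1 := by
    rw [← Real.exp_add]; simp
  rw [Real.sinh_eq, Real.cosh_eq]
  have hpoly : (1 - z) * (1 + z + z^2/2 + 2*z^3/9)^2 ≤ 1 + z := by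
    nlinarith [pow_nonneg h0 3, pow_nonneg h0 4, pow_nonneg h0 5, pow_nonneg h0 6, pow_nonneg h0 7]
  nlinarith [hU, hL, hE1, hinv, Real.exp_pos z, Real.exp_pos (-z),
    mul_le_mul_of_nonneg_left hU (Real.exp_pos z).le, hpoly,
    mul_le_mul_of_nonneg_right hU (by linarith : (0:ℝ) ≤ 1 - z)]

private lemma arctan_le_self {x : ℝ} (hx : 0 ≤ x) : Real.arctan x ≤ x := by
  have h0 : 0 ≤ Real.arctan x := by
    have := Real.arctan_strictMono.monotone hx
    rwa [Real.arctan_zero] at this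
  have h2 := Real.le_tan h0 (Real.arctan_lt_pi_div_two x)
  rwa [Real.tan_arctan] at h2

private lemma arctan_lower {u : ℝ} (hu : 0 ≤ u) : u - u^3/3 ≤ Real.arctan u := by
  have mono : MonotoneOn (fun v : ℝ => Real.arctan v - (v - v^3/3)) (Set.Ici 0) := by
    have hd : ∀ x : ℝ, HasDerivAt (fun v : ℝ => Real.arctan v - (v - v^3/3))
        (1/(1+x^2) - (1 - 3*x^(3-1)/3)) x := by
      intro x
      exact (Real.hasDerivAt_arctan x).sub ((hasDerivAt_id x).sub ((hasDerivAt_pow 3 x).div_const 3))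
    apply monotoneOn_of_deriv_nonneg (convex_Ici 0)
    · exact (Real.continuous_arctan.sub (by continuity)).continuousOn
    · intro x _
      exact ((hd x).differentiableAt).differentiableWithinAt
    · intro x _
      rw [(hd x).deriv]
      have hx2 : (0:ℝ) < 1 + x^2 := by positivity
      have h3 : (1:ℝ) - x^2 ≤ (1+x^2)⁻¹ := by
        rw [inv_eq_one_div, le_div_iff₀ hx2]; nlinarith [sq_nonneg (x^2)]
      norm_num
      linarith
  have := mono (Set.self_mem_Ici) (Set.mem_Ici.2 hu) hu
  simp only [Real.arctan_zero] at this
  linarith [this]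

private lemma small_core {z y : ℝ} (hz0 : 0 < z) (hz12 : z ≤ 1/2)
    (hyw : z - z^3/3 ≤ y) (hyz : y ≤ z) (hy0 : 0 ≤ y) (hw0 : 0 ≤ z - z^3/3) :
    (8*π*z^2 - 32*z^2*((z - z^3/3) - (z - z^3/3)^3/3))*(1+y^2)^2 ≤ 8*π*y^2 := by
  have hπ : (0:ℝ) < π := Real.pi_pos
  have hπ4 : (3.1415:ℝ) < π := Real.pi_gt_d4
  have hπ5 : π < (3.1416:ℝ) := Real.pi_lt_d4
  have hv : (0:ℝ) ≤ 1/2 - z := by linarith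
  have hz : (0:ℝ) ≤ z := hz0.le
  have hu : (0:ℝ) ≤ 1/4 - z^2 := by nlinarith
  obtain ⟨w, hw_def⟩ : ∃ w : ℝ, w = z - z^3/3 := ⟨_, rfl⟩
  rw [← hw_def]
  rw [← hw_def] at hyw hw0
  have hwz : w ≤ z := by rw [hw_def]; nlinarith [pow_nonneg hz 3]
  have hby : (0:ℝ) < (1+y^2)^2 := by positivity
  have hbw : (0:ℝ) < (1+w^2)^2 := by positivity
  have hW85 : 0.85*z ≤ w - w^3/3 := by
    rw [hw_def]
    nlinarith [mul_nonneg hz (pow_nonneg hu 1), mul_nonneg hz (pow_nonneg hu 2),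
      mul_nonneg hz (pow_nonneg hu 3), mul_nonneg hz (pow_nonneg hu 4), hz, hu]
  have hU : 8*(3.1416:ℝ)*(z^2*(1+w^2)^2 - w^2) ≤ 27.2*z^3*(1+w^2)^2 := by
    rw [hw_def]
    nlinarith [mul_nonneg (pow_nonneg hz 2) (pow_nonneg hv 13),
      mul_nonneg (pow_nonneg hz 3) (pow_nonneg hv 12),
      mul_nonneg (pow_nonneg hz 4) (pow_nonneg hv 11),
      mul_nonneg (pow_nonneg hz 5) (pow_nonneg hv 10),
      mul_nonneg (pow_nonneg hz 6) (pow_nonneg hv 9),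
      mul_nonneg (pow_nonneg hz 7) (pow_nonneg hv 8),
      mul_nonneg (pow_nonneg hz 8) (pow_nonneg hv 7),
      mul_nonneg (pow_nonneg hz 9) (pow_nonneg hv 6),
      mul_nonneg (pow_nonneg hz 10) (pow_nonneg hv 5),
      mul_nonneg (pow_nonneg hz 11) (pow_nonneg hv 4),
      mul_nonneg (pow_nonneg hz 12) (pow_nonneg hv 3),
      mul_nonneg (pow_nonneg hz 13) (pow_nonneg hv 2),
      mul_nonneg (pow_nonneg hz 14) (pow_nonneg hv 1),
      pow_nonneg hz 15]
  have hC : 8*π*z^2 - 32*z^2*(w - w^3/3) ≤ 8*π*z^2 - 27.2*z^3 := by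
    nlinarith [mul_nonneg (sq_nonneg z) (sub_nonneg.2 hW85)]
  have h1 : (0:ℝ) ≤ z^2*(1+w^2)^2 - w^2 := by
    nlinarith [mul_self_le_mul_self hw0 hwz, sq_nonneg w, sq_nonneg (w*z),
      sq_nonneg (w^2*z)]
  have hB : (8*π*z^2 - 27.2*z^3)*(1+w^2)^2 ≤ 8*π*w^2 := by
    nlinarith [mul_nonneg h1 (sub_nonneg.2 hπ5.le), hU]
  have hsq : w^2 ≤ y^2 := by nlinarith
  have hyw14 : y*w ≤ 1/4 := by nlinarith
  have hyw2 : y^2*w^2 ≤ 1 := by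
    nlinarith [mul_self_le_mul_self (mul_nonneg hy0 hw0) hyw14]
  have hA2 : 8*π*w^2*(1+y^2)^2 ≤ 8*π*y^2*(1+w^2)^2 := by
    nlinarith [mul_nonneg (mul_nonneg (sub_nonneg.2 hsq) (sub_nonneg.2 hyw2)) hπ.le]
  have step1 : ((8*π*z^2 - 32*z^2*(w - w^3/3))*(1+y^2)^2)*(1+w^2)^2
      ≤ (8*π*y^2)*(1+w^2)^2 := by
    nlinarith [mul_nonneg (mul_nonneg (sub_nonneg.2 hC) hby.le) hbw.le,
      mul_nonneg (sub_nonneg.2 hB) hby.le, hA2]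
  exact (mul_le_mul_iff_of_pos_right hbw).mp step1

private lemma large_core {s h : ℝ} (hs1 : 1 < s)
    (hl : s + s^3/6 + s^5/120 ≤ h) (hsinh : 0 < h) :
    4 * s ^ 2 * (h ^ 2 + 1) ≤ 2 * π * h ^ 2 * h := by
  have hπ : (0:ℝ) < π := Real.pi_pos
  have hπ4 : (3.1415:ℝ) < π := Real.pi_gt_d4
  have hs0 : (0:ℝ) < s := by linarith
  have hu : (0:ℝ) ≤ s - 1 := by linarith
  have hh1 : (0:ℝ) < s + s^3/6 + s^5/120 := by positivity
  have hd : (0:ℝ) ≤ h - (s + s^3/6 + s^5/120) := by linarith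
  have hph : (0:ℝ) ≤ π*(s + s^3/6 + s^5/120) - 2*s^2 := by
    nlinarith [mul_nonneg hs0.le (sq_nonneg (s-2)), hπ4, hs0.le, pow_nonneg hs0.le 3,
      pow_nonneg hs0.le 5]
  have hR : (0:ℝ) ≤ 3.1415*(s + s^3/6 + s^5/120)^3 - 2*s^2*(1+(s + s^3/6 + s^5/120)^2) := by
    nlinarith [pow_nonneg hu 1, pow_nonneg hu 2, pow_nonneg hu 3, pow_nonneg hu 4,
      pow_nonneg hu 5, pow_nonneg hu 6, pow_nonneg hu 7, pow_nonneg hu 8, pow_nonneg hu 9,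
      pow_nonneg hu 10, pow_nonneg hu 11, pow_nonneg hu 12, pow_nonneg hu 13,
      pow_nonneg hu 14, pow_nonneg hu 15]
  have ha : (0:ℝ) ≤ π * h * (h - (s + s^3/6 + s^5/120))^2 :=
    mul_nonneg (mul_nonneg hπ.le hsinh.le) (sq_nonneg _)
  have hb : (0:ℝ) ≤ π * h * (s + s^3/6 + s^5/120) * (h - (s + s^3/6 + s^5/120)) :=
    mul_nonneg (mul_nonneg (mul_nonneg hπ.le hsinh.le) hh1.le) hd
  have hc : (0:ℝ) ≤ (h - (s + s^3/6 + s^5/120)) * (π*(s + s^3/6 + s^5/120) - 2*s^2)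
      * (h + (s + s^3/6 + s^5/120)) :=
    mul_nonneg (mul_nonneg hd hph) (by linarith)
  have he : (0:ℝ) ≤ (π - 3.1415) * (s + s^3/6 + s^5/120)^3 :=
    mul_nonneg (by linarith) (by positivity)
  nlinarith [ha, hb, hc, he, hR]

theorem tanh_sq_div_ge_inv_two_pi (t : ℝ) (ht : 0 < t) :
    Real.tanh (t / 2) ^ 2 / (t ^ 2 * Real.arctan (1 / Real.sinh (t / 2))) ≥
      1 / (2 * Real.pi) := by
  obtain ⟨s, hs_def⟩ : ∃ s:ℝ, t/2 = s := ⟨_, rfl⟩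
  rw [hs_def]
  have hs : 0 < s := by rw [← hs_def]; linarith
  have hsinh : 0 < Real.sinh s := Real.sinh_pos_iff.2 hs
  have hA : 0 < Real.arctan (1 / Real.sinh s) := by
    rw [← Real.arctan_zero]
    exact Real.arctan_strictMono (by positivity)
  have hπ : (0:ℝ) < π := Real.pi_pos
  have key : 4*s^2*Real.arctan (1/Real.sinh s) ≤ 2*π*Real.tanh s^2 := by
    rcases le_or_gt s 1 with hs1 | hs1
    · -- small branch : s ≤ 1
      obtain ⟨z, hz_def⟩ : ∃ z : ℝ, z = s/2 := ⟨_, rfl⟩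
      have hz0 : 0 < z := by rw [hz_def]; linarith
      have hz12 : z ≤ 1/2 := by rw [hz_def]; linarith
      have hs2z : s = 2*z := by rw [hz_def]; ring
      obtain ⟨y, hy_def⟩ : ∃ y : ℝ, y = Real.tanh z := ⟨_, rfl⟩
      have hyw : z - z^3/3 ≤ y := hy_def ▸ tanh_lower hz0.le hz12
      have hyz : y ≤ z := hy_def ▸ tanh_upper hz0.le hz12
      have hzsq : z^2 ≤ 1/4 := by nlinarith
      have hw0 : 0 ≤ z - z^3/3 := by nlinarith [mul_le_mul_of_nonneg_left hzsq hz0.le]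
      have hy0 : 0 ≤ y := le_trans hw0 hyw
      have hy1 : y < 1 := by linarith
      have hcz : 0 < Real.cosh z := Real.cosh_pos z
      have hid : Real.cosh z^2 - Real.sinh z^2 = 1 := Real.cosh_sq_sub_sinh_sq z
      have hsinh2 : Real.sinh s = 2*y/(1-y^2) := by
        rw [hs2z, Real.sinh_two_mul, hy_def, Real.tanh_eq_sinh_div_cosh]
        have h1y : (1:ℝ) - (Real.sinh z / Real.cosh z)^2 ≠ 0 := by
          rw [div_pow]
          have : Real.sinh z ^2 / Real.cosh z^2 < 1 := by
            rw [div_lt_one (by positivity)]; nlinarith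
          nlinarith [this]
        field_simp
        nlinarith [hid, sq_nonneg (Real.sinh z), sq_nonneg (Real.cosh z)]
      have htanh : Real.tanh s = 2*y/(1+y^2) := by
        rw [hs2z, Real.tanh_eq_sinh_div_cosh, Real.sinh_two_mul, Real.cosh_two_mul, hy_def,
          Real.tanh_eq_sinh_div_cosh]
        field_simp
      have h2a : 2*Real.arctan y = Real.arctan (2*y/(1-y^2)) :=
        Real.two_mul_arctan (by linarith) hy1
      have harc : Real.arctan (1/Real.sinh s) = π/2 - 2*Real.arctan y := by
        rw [one_div, Real.arctan_inv_of_pos hsinh, hsinh2, ← h2a]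
      have harcW : (z - z^3/3) - (z - z^3/3)^3/3 ≤ Real.arctan y := by
        have h1 : y - y^3/3 ≤ Real.arctan y := arctan_lower hy0
        have h2 : (z - z^3/3) - (z - z^3/3)^3/3 ≤ y - y^3/3 := by
          have h3 : 0 ≤ 3 - y^2 - y*(z - z^3/3) - (z - z^3/3)^2 := by nlinarith
          nlinarith [mul_nonneg (sub_nonneg.2 hyw) h3]
        linarith
      have hden : (0:ℝ) < (1+y^2)^2 := by positivity
      have main : (8*π*z^2 - 32*z^2*((z - z^3/3) - (z - z^3/3)^3/3))*(1+y^2)^2 ≤ 8*π*y^2 :=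
        small_core hz0 hz12 hyw hyz hy0 hw0
      have step : 8*π*z^2 - 32*z^2*((z - z^3/3) - (z - z^3/3)^3/3) ≤ 8*π*y^2/(1+y^2)^2 :=
        (le_div_iff₀ hden).2 main
      calc 4*s^2*Real.arctan (1/Real.sinh s)
          = 8*π*z^2 - 32*z^2*Real.arctan y := by rw [harc, hs2z]; ring
        _ ≤ 8*π*z^2 - 32*z^2*((z - z^3/3) - (z - z^3/3)^3/3) := by
            have h4 : 0 ≤ 32*z^2*(Real.arctan y - ((z - z^3/3) - (z - z^3/3)^3/3)) :=
              mul_nonneg (by positivity) (sub_nonneg.2 harcW)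
            linarith [h4]
        _ ≤ 8*π*y^2/(1+y^2)^2 := step
        _ = 2*π*Real.tanh s^2 := by rw [htanh, div_pow]; ring
    · -- large branch : 1 < s
      have hb : Real.arctan (1/Real.sinh s) ≤ 1/Real.sinh s := arctan_le_self (by positivity)
      have hstep : 4*s^2*Real.arctan (1/Real.sinh s) ≤ 4*s^2*(1/Real.sinh s) := by
        have h4 : 0 ≤ 4*s^2*(1/Real.sinh s - Real.arctan (1/Real.sinh s)) :=
          mul_nonneg (by positivity) (sub_nonneg.2 hb)
        linarith [h4]
      have hcs : 0 < Real.cosh s := Real.cosh_pos s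
      have hfin : 4*s^2*(1/Real.sinh s) ≤ 2*π*Real.tanh s^2 := by
        rw [Real.tanh_eq_sinh_div_cosh, div_pow, mul_one_div, ← mul_div_assoc,
          div_le_div_iff₀ hsinh (by positivity)]
        have hid : Real.cosh s^2 = Real.sinh s^2 + 1 := Real.cosh_sq s
        have hl : s + s^3/6 + s^5/120 ≤ Real.sinh s := sinh_lower (by linarith)
        rw [hid]
        exact large_core hs1 hl hsinh
      linarith
  rw [ge_iff_le, div_le_div_iff₀ (by positivity) (by positivity)]
  have ht2 : t^2 = 4*s^2 := by rw [← hs_def]; ring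
  rw [one_mul, ht2]
  linarith [key]
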